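/- Soundness of the full sumcheck protocol: if H ≠ Σ_{b∈{0,1}^ℓ} f(b) for a polynomial f of individual degree ≤ d, then for any (possibly dishonest) prover strategy, the probability over the verifier's uniformly random challenges r_1,…,r_ℓ ∈ F that all ℓ round checks and the final check f_ℓ(r_ℓ) = f(r_1,…,r_ℓ) pass is at most dℓ/|F|. -/

import Mathlib

open MvPolynomial

namespace Stmt10Aux

open MvPolynomial Polynomial

variable {F : Type*} [Field F] {m : ℕ}

/-- Evaluation of a univariate specialization. -/
lemma eval_aeval (x : F) {σ : Type*} (φ : σ → Polynomial F) (f : MvPolynomial σ F) :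
    Polynomial.eval x (MvPolynomial.aeval φ f) =
      MvPolynomial.eval (fun k => (φ k).eval x) f := by
  rw [MvPolynomial.aeval_def, ← Polynomial.coe_evalRingHom,
    MvPolynomial.eval₂_comp_left (Polynomial.evalRingHom x)]
  have h1 : (Polynomial.evalRingHom x).comp (algebraMap F (Polynomial F)) = RingHom.id F := by
    ext a; simp
  rw [h1]
  rfl

/-- Boolean points whose first `j` coordinates are pinned to `false`. -/
def Bset (m j : ℕ) : Finset (Fin (m+1) → Bool) :=
  Finset.univ.filter fun b => ∀ k : Fin (m+1), k.val < j → b k = false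

/-- The substitution point for round `j`. -/
noncomputable def ptF (j : Fin (m+1)) (c : Fin j.val → F) (b : Fin (m+1) → Bool) :
    Fin (m+1) → Polynomial F :=
  fun k => if h : k.val < j.val then Polynomial.C (c ⟨k.val, h⟩)
    else if k = j then Polynomial.X else if b k then 1 else 0

/-- The honest round-`j` polynomial. -/
noncomputable def sPoly (f : MvPolynomial (Fin (m+1)) F) (j : Fin (m+1)) (c : Fin j.val → F) :
    Polynomial F := ∑ b ∈ Bset m (j.val+1), MvPolynomial.aeval (ptF j c b) f

lemma eval_sPoly (f : MvPolynomial (Fin (m+1)) F) (j : Fin (m+1)) (c : Fin j.val → F) (x : F) :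
    (sPoly f j c).eval x = ∑ b ∈ Bset m (j.val+1),
      MvPolynomial.eval (fun k : Fin (m+1) => if h : k.val < j.val then c ⟨k.val, h⟩
        else if k = j then x else if b k then 1 else 0) f := by
  rw [sPoly, Polynomial.eval_finset_sum]
  refine Finset.sum_congr rfl fun b _ => ?_
  rw [eval_aeval]
  refine congrArg (fun p => MvPolynomial.eval p f) ?_
  funext k
  by_cases h : k.val < j.val
  · simp [ptF, h]
  · by_cases h2 : k = j
    · simp [ptF, h, h2]
    · by_cases h3 : b k <;> simp [ptF, h, h2, h3]

/-- Reindexing a sum over `Bset m j` by splitting off coordinate `j`. -/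
lemma Bset_sum_split {M : Type*} [AddCommMonoid M] (j : ℕ) (hj : j < m + 1)
    (G : (Fin (m+1) → Bool) → M) :
    ∑ b ∈ Bset m j, G b =
      ∑ b ∈ Bset m (j+1), ∑ v : Bool, G (Function.update b ⟨j, hj⟩ v) := by
  classical
  set jf : Fin (m+1) := ⟨j, hj⟩ with hjf
  rw [← Finset.sum_product']
  refine Finset.sum_nbij' (fun b => (Function.update b jf false, b jf))
    (fun p => Function.update p.1 jf p.2) ?_ ?_ ?_ ?_ ?_
  · intro b hb
    simp only [Bset, Finset.mem_filter, Finset.mem_univ, true_and] at hb ⊢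
    refine Finset.mk_mem_product ?_ (Finset.mem_univ _)
    simp only [Bset, Finset.mem_filter, Finset.mem_univ, true_and]
    intro k hk
    by_cases hkj : k = jf
    · subst hkj; simp
    · rw [Function.update_of_ne hkj]
      refine hb k ?_
      have : k.val ≠ j := fun h => hkj (Fin.ext h)
      omega
  · intro p hp
    rw [Finset.mem_product] at hp
    have hp1 := hp.1
    simp only [Bset, Finset.mem_filter, Finset.mem_univ, true_and] at hp1 ⊢
    intro k hk
    have hkj : k ≠ jf := by
      intro h; subst h; simp only [jf] at hk; omega
    rw [Function.update_of_ne hkj]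
    exact hp1 k (by omega)
  · intro b hb
    simp only [Function.update_idem, Function.update_eq_self]
  · intro p hp
    rw [Finset.mem_product] at hp
    have hp1 := hp.1
    simp only [Bset, Finset.mem_filter, Finset.mem_univ, true_and] at hp1
    have h1 : p.1 jf = false := hp1 jf (by simp [jf])
    ext
    · simp only [Function.update_idem]
      rw [show (false : Bool) = p.1 jf from h1.symm, Function.update_eq_self]
    · simp
  · intro b hb
    simp only [Function.update_idem, Function.update_eq_self]


lemma Bset_zero : Bset m 0 = Finset.univ := by
  simp [Bset]

lemma Bset_full : Bset m (m+1) = {fun _ => false} := by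
  ext b
  simp only [Bset, Finset.mem_filter, Finset.mem_univ, true_and, Finset.mem_singleton]
  constructor
  · intro h; funext k; exact h k k.isLt
  · intro h k hk; rw [h]

/-- Base identity: the two boundary evaluations of the round-0 honest polynomial
sum to the true sum. -/
lemma sPoly_zero (f : MvPolynomial (Fin (m+1)) F) (c : Fin ((0 : Fin (m+1)).val) → F) :
    (sPoly f 0 c).eval 0 + (sPoly f 0 c).eval 1 =
      ∑ b : Fin (m + 1) → Bool,
        MvPolynomial.eval (fun k => if b k then (1 : F) else 0) f := by
  rw [eval_sPoly, eval_sPoly]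
  rw [show (Finset.univ : Finset (Fin (m+1) → Bool)) = Bset m 0 from Bset_zero.symm]
  rw [Bset_sum_split 0 (by omega)]
  rw [← Finset.sum_add_distrib]
  refine Finset.sum_congr rfl fun b hb => ?_
  rw [Fintype.sum_bool]
  rw [add_comm]
  congr 1
  · refine congrArg (fun p => MvPolynomial.eval p f) ?_
    funext k
    by_cases hk : k = (⟨0, by omega⟩ : Fin (m+1))
    · subst hk
      simp [Function.update_self]
    · have hk' : ¬ ((k : ℕ) < ((0 : Fin (m+1)) : ℕ)) := by simp
      have hk2 : k ≠ (0 : Fin (m+1)) := hk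
      rw [Function.update_of_ne hk]
      simp [hk2, hk']
  · refine congrArg (fun p => MvPolynomial.eval p f) ?_
    funext k
    by_cases hk : k = (⟨0, by omega⟩ : Fin (m+1))
    · subst hk
      simp [Function.update_self]
    · have hk2 : k ≠ (0 : Fin (m+1)) := hk
      rw [Function.update_of_ne hk]
      simp [hk2]


/-- Step identity: evaluating the honest round-`j` polynomial equals the sum of the
two boundary evaluations of the honest round-`j+1` polynomial. -/
lemma sPoly_step (f : MvPolynomial (Fin (m+1)) F) (j : Fin m)
    (c : Fin ((j.castSucc : Fin (m+1)).val) → F) (x : F) :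
    (sPoly f j.castSucc c).eval x =
      (sPoly f j.succ (Fin.snoc c x)).eval 0 + (sPoly f j.succ (Fin.snoc c x)).eval 1 := by
  rw [eval_sPoly, eval_sPoly, eval_sPoly]
  have hcv : ((j.castSucc : Fin (m+1)) : ℕ) = (j : ℕ) := rfl
  have hsv : ((j.succ : Fin (m+1)) : ℕ) = (j : ℕ) + 1 := rfl
  simp only [Fin.coe_castSucc, Fin.val_succ]
  rw [Bset_sum_split ((j:ℕ)+1) (by omega)]
  rw [← Finset.sum_add_distrib]
  refine Finset.sum_congr rfl fun b hb => ?_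
  simp only [Bset, Finset.mem_filter, Finset.mem_univ, true_and] at hb
  rw [Fintype.sum_bool, add_comm]
  have key : ∀ (v : Bool) (y : F), ((if v then (1:F) else 0) = y) →
      (MvPolynomial.eval (fun k : Fin (m+1) => if h : (k:ℕ) < (j:ℕ) then c ⟨k, h⟩
        else if k = j.castSucc then x
        else if Function.update b ⟨(j:ℕ)+1, by omega⟩ v k then (1:F) else 0) f) =
      (MvPolynomial.eval (fun k : Fin (m+1) => if h : (k:ℕ) < (j:ℕ)+1
        then Fin.snoc (α := fun _ => F) (n := (j:ℕ)) c x ⟨k, h⟩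
        else if k = j.succ then y
        else if b k then (1:F) else 0) f) := by
    intro v y hy
    refine congrArg (fun p => MvPolynomial.eval p f) ?_
    funext k
    rcases lt_trichotomy (k:ℕ) ((j:ℕ)) with h | h | h
    · have h1 : (k:ℕ) < (j:ℕ)+1 := by omega
      rw [dif_pos h, dif_pos h1]
      have : Fin.snoc (α := fun _ => F) (n := (j:ℕ)) c x (⟨(k:ℕ), h1⟩ : Fin ((j:ℕ)+1))
          = c ⟨(k:ℕ), h⟩ := by
        rw [Fin.snoc]
        rw [dif_pos (show ((⟨(k:ℕ), h1⟩ : Fin ((j:ℕ)+1)) : ℕ) < (j:ℕ) from h)]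
        rfl
      rw [this]
    · -- k = j.castSucc
      have h1 : (k:ℕ) < (j:ℕ)+1 := by omega
      have hne : ¬ ((k:ℕ) < (j:ℕ)) := by omega
      rw [dif_neg hne, dif_pos h1]
      have hkc : k = j.castSucc := Fin.ext h
      rw [if_pos hkc]
      have : Fin.snoc (α := fun _ => F) (n := (j:ℕ)) c x (⟨(k:ℕ), h1⟩ : Fin ((j:ℕ)+1)) = x := by
        rw [Fin.snoc]
        rw [dif_neg (show ¬ (((⟨(k:ℕ), h1⟩ : Fin ((j:ℕ)+1)) : ℕ) < (j:ℕ)) from hne)]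
        exact cast_eq rfl x
      rw [this]
    · have hne : ¬ ((k:ℕ) < (j:ℕ)) := by omega
      have hne1 : ¬ ((k:ℕ) < (j:ℕ)+1) := by omega
      have hnc : k ≠ j.castSucc := by
        intro hk; rw [hk] at h; exact absurd h (by simp [hcv])
      rw [dif_neg hne, dif_neg hne1, if_neg hnc]
      by_cases hks : k = j.succ
      · rw [if_pos hks]
        have : k = (⟨(j:ℕ)+1, by omega⟩ : Fin (m+1)) := by
          apply Fin.ext
          have hv := congrArg Fin.val hks
          simpa using hv
        rw [this, Function.update_self, hy]
      · rw [if_neg hks]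
        have hkne : k ≠ (⟨(j:ℕ)+1, by omega⟩ : Fin (m+1)) := by
          intro hk
          refine hks (Fin.ext ?_)
          have hv := congrArg Fin.val hk
          simpa using hv
        rw [Function.update_of_ne hkne]
  exact congrArg₂ (· + ·) (key false 0 rfl) (key true 1 rfl)


/-- Last-round identity: the honest last-round polynomial evaluates to `f` itself. -/
lemma sPoly_last (f : MvPolynomial (Fin (m+1)) F) (c : Fin ((Fin.last m : Fin (m+1)).val) → F)
    (r : Fin (m+1) → F) (hc : ∀ (k : Fin m), c ⟨(k:ℕ), k.isLt⟩ = r ⟨(k:ℕ), by omega⟩) :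
    (sPoly f (Fin.last m) c).eval (r (Fin.last m)) = MvPolynomial.eval r f := by
  rw [eval_sPoly]
  have : ((Fin.last m : Fin (m+1)) : ℕ) = m := rfl
  have hB : Bset m ((Fin.last m : Fin (m+1)).val + 1) = {fun _ => false} := Bset_full
  rw [hB, Finset.sum_singleton]
  refine congrArg (fun p => MvPolynomial.eval p f) ?_
  funext k
  by_cases h : (k:ℕ) < ((Fin.last m : Fin (m+1)) : ℕ)
  · rw [dif_pos h]
    rw [hc ⟨(k:ℕ), h⟩]
  · rw [dif_neg h]
    have hk : k = Fin.last m := by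
      apply Fin.ext
      have := k.isLt
      simp only [Fin.val_last] at h ⊢
      omega
    rw [if_pos hk, hk]

/-- Degree bound for a univariate specialization. -/
lemma degree_aeval_le (f : MvPolynomial (Fin (m+1)) F) (j : Fin (m+1))
    (φ : Fin (m+1) → Polynomial F)
    (hφ : ∀ k, k ≠ j → (φ k).degree ≤ 0) (hφj : (φ j).degree ≤ 1) :
    (MvPolynomial.aeval φ f).degree ≤ (f.degreeOf j : WithBot ℕ) := by
  rw [MvPolynomial.aeval_def, MvPolynomial.eval₂_eq]
  refine (Polynomial.degree_sum_le _ _).trans ?_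
  rw [Finset.sup_le_iff]
  intro dm hdm
  refine (Polynomial.degree_mul_le _ _).trans ?_
  have h1 : (algebraMap F (Polynomial F) (MvPolynomial.coeff dm f)).degree ≤ 0 :=
    Polynomial.degree_C_le
  have h2 : (∏ i ∈ dm.support, φ i ^ dm i).degree ≤ (dm j : WithBot ℕ) := by
    refine (Polynomial.degree_prod_le _ _).trans ?_
    have hterm : ∀ i ∈ dm.support, (φ i ^ dm i).degree ≤
        (if i = j then (dm j : WithBot ℕ) else 0) := by
      intro i _
      by_cases hij : i = j
      · subst hij
        rw [if_pos rfl]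
        refine (Polynomial.degree_pow_le _ _).trans ?_
        calc (dm i) • (φ i).degree ≤ (dm i) • (1 : WithBot ℕ) :=
              nsmul_le_nsmul_right hφj _
          _ = (dm i : WithBot ℕ) := by
              rw [show (1 : WithBot ℕ) = ((1:ℕ) : WithBot ℕ) from rfl]
              rw [← Nat.cast_smul_eq_nsmul ℕ]
              push_cast
              ring
      · rw [if_neg hij]
        refine (Polynomial.degree_pow_le _ _).trans ?_
        calc (dm i) • (φ i).degree ≤ (dm i) • (0 : WithBot ℕ) :=
              nsmul_le_nsmul_right (hφ i hij) _
          _ = 0 := smul_zero _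
    refine (Finset.sum_le_sum hterm).trans ?_
    rw [Finset.sum_ite_eq' dm.support j (fun _ => (dm j : WithBot ℕ))]
    split
    · exact le_refl _
    · exact_mod_cast Nat.zero_le (dm j)
  calc (algebraMap F (Polynomial F) (MvPolynomial.coeff dm f)).degree
        + (∏ i ∈ dm.support, φ i ^ dm i).degree
      ≤ 0 + (dm j : WithBot ℕ) := add_le_add h1 h2
    _ = (dm j : WithBot ℕ) := zero_add _
    _ ≤ (f.degreeOf j : WithBot ℕ) := by
        rw [MvPolynomial.degreeOf_eq_sup]
        exact_mod_cast Finset.le_sup (f := fun m0 => m0 j) hdm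

/-- Degree bound for the honest round polynomials. -/
lemma degree_sPoly_le {d : ℕ} (f : MvPolynomial (Fin (m+1)) F) (hf : ∀ i, f.degreeOf i ≤ d)
    (j : Fin (m+1)) (c : Fin j.val → F) :
    (sPoly f j c).degree ≤ (d : WithBot ℕ) := by
  refine (Polynomial.degree_sum_le _ _).trans ?_
  rw [Finset.sup_le_iff]
  intro b _
  refine (degree_aeval_le f j (ptF j c b) ?_ ?_).trans ?_
  · intro k hk
    by_cases h : (k:ℕ) < (j:ℕ)
    · simp only [ptF, dif_pos h]
      exact Polynomial.degree_C_le
    · simp only [ptF, dif_neg h, if_neg hk]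
      by_cases hb : b k
      · simp [hb]
      · simp [hb]
  · have : ptF j c (b := b) j = Polynomial.X := by
      simp [ptF]
    rw [this]
    exact Polynomial.degree_X_le
  · exact_mod_cast hf j


open scoped Classical in
/-- Counting lemma: the set of points where a nonzero specified polynomial of degree
`≤ d` (depending only on the coordinates before `j`) vanishes at coordinate `j` has
density at most `d/|F|`. -/
lemma card_filter_root_le [Fintype F] (d : ℕ) (j : Fin (m+1))
    (q : (Fin j.val → F) → Polynomial F) (hq : ∀ c, (q c).degree ≤ (d : WithBot ℕ)) :
    (Finset.univ.filter fun r : Fin (m+1) → F =>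
      q (fun k => r ⟨k.val, k.isLt.trans j.isLt⟩) ≠ 0 ∧
      (q (fun k => r ⟨k.val, k.isLt.trans j.isLt⟩)).eval (r j) = 0).card
      ≤ d * (Fintype.card F) ^ m := by
  classical
  set ρ : (Fin (m+1) → F) → ({k : Fin (m+1) // k ≠ j} → F) := fun r k => r k.1 with hρ
  rw [Finset.card_eq_sum_card_fiberwise
    (f := ρ) (t := Finset.univ) (fun r _ => Finset.mem_univ (ρ r))]
  have hfiber : ∀ v : {k : Fin (m+1) // k ≠ j} → F,
      ((Finset.univ.filter fun r : Fin (m+1) → F =>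
        q (fun k => r ⟨k.val, k.isLt.trans j.isLt⟩) ≠ 0 ∧
        (q (fun k => r ⟨k.val, k.isLt.trans j.isLt⟩)).eval (r j) = 0).filter
          fun r => ρ r = v).card ≤ d := by
    intro v
    set cv : Fin j.val → F := fun k => v ⟨⟨k.val, k.isLt.trans j.isLt⟩,
      fun h => absurd (congrArg Fin.val h) (by simpa using k.isLt.ne)⟩ with hcv
    have hpre : ∀ r : Fin (m+1) → F, ρ r = v →
        (fun k : Fin j.val => r ⟨k.val, k.isLt.trans j.isLt⟩) = cv := by
      intro r hr
      subst hr
      funext k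
      rfl
    refine le_trans (Finset.card_le_card_of_injOn (fun r => r j)
      (s := _) (t := (q cv).roots.toFinset) ?_ ?_) ?_
    · intro r hr
      simp only [Finset.mem_coe, Finset.mem_filter, Finset.mem_univ, true_and] at hr ⊢
      obtain ⟨⟨hne, heval⟩, hv⟩ := hr
      rw [hpre r hv] at hne heval
      rw [Multiset.mem_toFinset, Polynomial.mem_roots hne]
      exact heval
    · intro r hr r' hr' hj
      simp only [Finset.mem_coe, Finset.mem_filter, Finset.mem_univ, true_and] at hr hr'
      funext k
      by_cases hk : k = j
      · rw [hk]; exact hj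
      · have := congrFun (hr.2.trans hr'.2.symm) ⟨k, hk⟩
        exact this
    · refine le_trans (Multiset.toFinset_card_le _) ?_
      refine le_trans (Polynomial.card_roots' _) ?_
      by_cases h0 : q cv = 0
      · simp [h0]
      · exact Polynomial.natDegree_le_iff_degree_le.mpr (hq cv)
  refine le_trans (Finset.sum_le_sum fun v _ => hfiber v) ?_
  rw [Finset.sum_const, smul_eq_mul, mul_comm]
  refine Nat.mul_le_mul_left d ?_
  rw [Finset.card_univ, Fintype.card_fun]
  refine Nat.pow_le_pow_right Fintype.card_pos ?_
  have : Fintype.card {k : Fin (m+1) // k ≠ j} = m := by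
    rw [Fintype.card_subtype_compl]
    simp
  omega


/-- The prefix of `r` of length `i+1` is the snoc of the prefix of length `i`. -/
lemma pre_snoc {α : Type*} (r : Fin (m+1) → α) (i : Fin m) :
    (fun k : Fin ((i.succ : Fin (m+1)).val) => r ⟨k.val, k.isLt.trans (i.succ : Fin (m+1)).isLt⟩)
      = Fin.snoc (α := fun _ => α) (n := ((i.castSucc : Fin (m+1)).val))
        (fun k => r ⟨k.val, k.isLt.trans (i.castSucc : Fin (m+1)).isLt⟩) (r i.castSucc) := by
  funext k
  rw [Fin.snoc]
  by_cases h : (k : ℕ) < ((i.castSucc : Fin (m+1)) : ℕ)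
  · rw [dif_pos h, cast_eq]
    exact congrArg r (Fin.ext rfl)
  · rw [dif_neg h, cast_eq]
    have hk : (k : ℕ) = (i : ℕ) := by
      have h1 := k.isLt
      have h2 : ((i.succ : Fin (m+1)) : ℕ) = (i:ℕ) + 1 := rfl
      have h3 : ((i.castSucc : Fin (m+1)) : ℕ) = (i:ℕ) := rfl
      omega
    exact congrArg r (Fin.ext hk)

end Stmt10Aux

open scoped Classical in
/-- Soundness of the full sumcheck protocol: if `H` is not the true sum, then for
any (adaptive) prover strategy `g` sending degree-`≤ d` round polynomials, the
probability over uniformly random challenges that all round checks and the final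
oracle check pass is at most `d·ℓ / |F|`. -/
theorem stmt10 {F : Type*} [Field F] [Fintype F] {m d : ℕ}
    (f : MvPolynomial (Fin (m + 1)) F) (hf : ∀ i, f.degreeOf i ≤ d) (H : F)
    (hH : H ≠ ∑ b : Fin (m + 1) → Bool, eval (fun k => if b k then (1 : F) else 0) f)
    (g : (j : Fin (m + 1)) → (Fin j.val → F) → Polynomial F)
    (hg : ∀ j c, (g j c).degree ≤ d) :
    ((Finset.univ.filter fun r : Fin (m + 1) → F =>
        letI pre : (j : Fin (m + 1)) → Fin j.val → F :=
          fun j k => r ⟨k.val, k.isLt.trans j.isLt⟩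
        (g 0 (pre 0)).eval 0 + (g 0 (pre 0)).eval 1 = H ∧
        (∀ j : Fin m, (g j.castSucc (pre j.castSucc)).eval (r j.castSucc) =
          (g j.succ (pre j.succ)).eval 0 + (g j.succ (pre j.succ)).eval 1) ∧
        (g (Fin.last m) (pre (Fin.last m))).eval (r (Fin.last m)) = eval r f).card : ℝ)
      / (Fintype.card F : ℝ) ^ (m + 1) ≤ ((d : ℝ) * (m + 1)) / (Fintype.card F : ℝ) := by
  classical
  have hF : (0:ℝ) < (Fintype.card F : ℝ) := by exact_mod_cast Fintype.card_pos
  set s := Stmt10Aux.sPoly f with hs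
  set E : Fin (m+1) → Finset (Fin (m+1) → F) := fun j =>
    Finset.univ.filter fun r : Fin (m+1) → F =>
      ((fun c => g j c - s j c) (fun k => r ⟨k.val, k.isLt.trans j.isLt⟩) ≠ 0 ∧
      ((fun c => g j c - s j c) (fun k => r ⟨k.val, k.isLt.trans j.isLt⟩)).eval (r j) = 0)
    with hE
  have hsub : (Finset.univ.filter fun r : Fin (m + 1) → F =>
        letI pre : (j : Fin (m + 1)) → Fin j.val → F :=
          fun j k => r ⟨k.val, k.isLt.trans j.isLt⟩
        (g 0 (pre 0)).eval 0 + (g 0 (pre 0)).eval 1 = H ∧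
        (∀ j : Fin m, (g j.castSucc (pre j.castSucc)).eval (r j.castSucc) =
          (g j.succ (pre j.succ)).eval 0 + (g j.succ (pre j.succ)).eval 1) ∧
        (g (Fin.last m) (pre (Fin.last m))).eval (r (Fin.last m)) = eval r f)
      ⊆ Finset.univ.biUnion E := by
    intro r hr
    rw [Finset.mem_filter] at hr
    obtain ⟨-, h1, h2, h3⟩ := hr
    have hex : ∃ j : Fin (m+1),
        g j (fun k => r ⟨k.val, k.isLt.trans j.isLt⟩) ≠
          s j (fun k => r ⟨k.val, k.isLt.trans j.isLt⟩) ∧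
        (g j (fun k => r ⟨k.val, k.isLt.trans j.isLt⟩)).eval (r j) =
          (s j (fun k => r ⟨k.val, k.isLt.trans j.isLt⟩)).eval (r j) := by
      by_contra hno
      push_neg at hno
      have main : ∀ j : Fin (m+1),
          g j (fun k => r ⟨k.val, k.isLt.trans j.isLt⟩) ≠
            s j (fun k => r ⟨k.val, k.isLt.trans j.isLt⟩) := by
        intro j
        induction j using Fin.induction with
        | zero =>
          intro heq
          refine hH ?_
          rw [← h1, heq, hs]
          exact Stmt10Aux.sPoly_zero f _
        | succ i ih =>
          intro heq
          refine hno i.castSucc ih ?_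
          calc (g i.castSucc (fun k => r ⟨k.val, k.isLt.trans i.castSucc.isLt⟩)).eval
                (r i.castSucc)
              = (g i.succ (fun k => r ⟨k.val, k.isLt.trans i.succ.isLt⟩)).eval 0 +
                (g i.succ (fun k => r ⟨k.val, k.isLt.trans i.succ.isLt⟩)).eval 1 := h2 i
            _ = (s i.succ (fun k => r ⟨k.val, k.isLt.trans i.succ.isLt⟩)).eval 0 +
                (s i.succ (fun k => r ⟨k.val, k.isLt.trans i.succ.isLt⟩)).eval 1 := by
                rw [heq]
            _ = (s i.castSucc (fun k => r ⟨k.val, k.isLt.trans i.castSucc.isLt⟩)).eval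
                (r i.castSucc) := by
                rw [hs]
                have hps := Stmt10Aux.pre_snoc r i
                rw [hps]
                exact (Stmt10Aux.sPoly_step f i _ (r i.castSucc)).symm
      refine hno (Fin.last m) (main (Fin.last m)) ?_
      rw [h3, hs]
      exact (Stmt10Aux.sPoly_last f _ r (fun k => rfl)).symm
    obtain ⟨j, hne, heq⟩ := hex
    rw [Finset.mem_biUnion]
    refine ⟨j, Finset.mem_univ j, ?_⟩
    rw [hE, Finset.mem_filter]
    refine ⟨Finset.mem_univ r, sub_ne_zero.mpr hne, ?_⟩
    rw [Polynomial.eval_sub, sub_eq_zero]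
    exact heq
  have hEcard : ∀ j, (E j).card ≤ d * (Fintype.card F) ^ m := by
    intro j
    refine Stmt10Aux.card_filter_root_le d j (fun c => g j c - s j c) ?_
    intro c
    refine (Polynomial.degree_sub_le _ _).trans ?_
    exact max_le (hg j c) (Stmt10Aux.degree_sPoly_le f hf j c)
  have hcard : (Finset.univ.filter fun r : Fin (m + 1) → F =>
        letI pre : (j : Fin (m + 1)) → Fin j.val → F :=
          fun j k => r ⟨k.val, k.isLt.trans j.isLt⟩
        (g 0 (pre 0)).eval 0 + (g 0 (pre 0)).eval 1 = H ∧
        (∀ j : Fin m, (g j.castSucc (pre j.castSucc)).eval (r j.castSucc) =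
          (g j.succ (pre j.succ)).eval 0 + (g j.succ (pre j.succ)).eval 1) ∧
        (g (Fin.last m) (pre (Fin.last m))).eval (r (Fin.last m)) = eval r f).card
      ≤ (m+1) * (d * (Fintype.card F) ^ m) := by
    refine (Finset.card_le_card hsub).trans ?_
    refine Finset.card_biUnion_le.trans ?_
    refine (Finset.sum_le_sum fun j _ => hEcard j).trans ?_
    rw [Finset.sum_const, smul_eq_mul, Finset.card_univ, Fintype.card_fin]
  rw [div_le_div_iff₀ (by positivity) hF]
  have hcR : ((Finset.univ.filter fun r : Fin (m + 1) → F =>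
        letI pre : (j : Fin (m + 1)) → Fin j.val → F :=
          fun j k => r ⟨k.val, k.isLt.trans j.isLt⟩
        (g 0 (pre 0)).eval 0 + (g 0 (pre 0)).eval 1 = H ∧
        (∀ j : Fin m, (g j.castSucc (pre j.castSucc)).eval (r j.castSucc) =
          (g j.succ (pre j.succ)).eval 0 + (g j.succ (pre j.succ)).eval 1) ∧
        (g (Fin.last m) (pre (Fin.last m))).eval (r (Fin.last m)) = eval r f).card : ℝ)
      ≤ ((m:ℝ)+1) * ((d:ℝ) * (Fintype.card F : ℝ) ^ m) := by
    exact_mod_cast hcard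
  calc ((Finset.univ.filter fun r : Fin (m + 1) → F =>
        letI pre : (j : Fin (m + 1)) → Fin j.val → F :=
          fun j k => r ⟨k.val, k.isLt.trans j.isLt⟩
        (g 0 (pre 0)).eval 0 + (g 0 (pre 0)).eval 1 = H ∧
        (∀ j : Fin m, (g j.castSucc (pre j.castSucc)).eval (r j.castSucc) =
          (g j.succ (pre j.succ)).eval 0 + (g j.succ (pre j.succ)).eval 1) ∧
        (g (Fin.last m) (pre (Fin.last m))).eval (r (Fin.last m)) = eval r f).card : ℝ)
        * (Fintype.card F : ℝ)
      ≤ (((m:ℝ)+1) * ((d:ℝ) * (Fintype.card F : ℝ) ^ m)) * (Fintype.card F : ℝ) :=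
        mul_le_mul_of_nonneg_right hcR hF.le
    _ = (d:ℝ) * ((m:ℝ)+1) * (Fintype.card F : ℝ) ^ (m+1) := by ring
    _ = (d:ℝ) * ((m:ℝ)+1) * (Fintype.card F : ℝ) ^ (m+1) := rfl
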